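/- Biased Fourier weight bound: let f: {±1}ᵐ → ℝ and ℓ ∈ [m]. Suppose there is w such that every restriction ρ ∈ {−1,1,⋆}ᵐ satisfies ∑_{|S|=ℓ}|f̂_ρ(S)| ≤ w (Fourier coefficients with respect to the uniform measure). Then for every bias vector μ ∈ [−1/2,1/2]ᵐ, the μ-biased level-ℓ Fourier weight satisfies ∑_{|S|=ℓ}|f̂^μ(S)| ≤ 4^ℓ·w. -/

import Mathlib

def toPM (b : Bool) : ℝ := if b then 1 else -1

def applyR {m : ℕ} (r : Fin m → Option Bool) (x : Fin m → ℝ) : Fin m → ℝ :=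
  fun i => match r i with
    | none => x i
    | some b => toPM b

noncomputable def hatU {m : ℕ} (g : (Fin m → ℝ) → ℝ) (S : Finset (Fin m)) : ℝ :=
  ((2:ℝ) ^ m)⁻¹ * ∑ x : Fin m → Bool, g (fun i => toPM (x i)) * ∏ i ∈ S, toPM (x i)

noncomputable def hatMu {m : ℕ} (μ : Fin m → ℝ) (f : (Fin m → ℝ) → ℝ) (S : Finset (Fin m)) : ℝ :=
  ∑ x : Fin m → Bool,
    (∏ i, (1 + toPM (x i) * μ i) / 2) * f (fun i => toPM (x i)) *
      ∏ i ∈ S, (toPM (x i) - μ i) / Real.sqrt (1 - (μ i) ^ 2)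

/-- weights of the random restriction -/
noncomputable def wgt (μ : ℝ) : Option Bool → ℝ
  | none => 1/2
  | some b => (1 + 2 * toPM b * μ)/4

lemma toPM_sq (b : Bool) : toPM b * toPM b = 1 := by cases b <;> simp [toPM]

lemma wgt_sum (μ : ℝ) : ∑ o : Option Bool, wgt μ o = 1 := by
  rw [Fintype.sum_option, Fintype.sum_bool]
  simp [wgt, toPM]; ring

lemma wgt_nonneg {μ : ℝ} (hμ : μ ∈ Set.Icc (-(1:ℝ)/2) (1/2)) (o : Option Bool) :
    0 ≤ wgt μ o := by
  obtain ⟨h1, h2⟩ := hμ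
  cases o with
  | none => norm_num [wgt]
  | some b => cases b <;> simp [wgt, toPM] <;> linarith

/-- the reindexing bijection: (point, choice) ↔ (restriction, cube point) -/
def Phi (m : ℕ) : (Fin m → Bool) × (Fin m → Option Bool) ≃ (Fin m → Option Bool) × (Fin m → Bool) where
  toFun p := (fun i => (p.2 i).map (fun _ => p.1 i), fun i => (p.2 i).getD (p.1 i))
  invFun q := (fun i => (q.1 i).getD (q.2 i), fun i => (q.1 i).map (fun _ => q.2 i))
  left_inv p := by
    ext i <;> rcases h : p.2 i with _ | b <;> simp [h]
  right_inv q := by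
    ext i <;> rcases h : q.1 i with _ | b <;> simp [h]

lemma coord_S (t μ : ℝ) (ht : t * t = 1) :
    (1 + t * μ) / 2 * ((t - μ) / Real.sqrt (1 - μ ^ 2)) =
      Real.sqrt (1 - μ ^ 2) * (t * (1/2)) := by
  have key : (1 + t * μ) * (t - μ) = t * (1 - μ ^ 2) := by linear_combination μ * ht
  rcases le_or_gt (1 - μ ^ 2) 0 with h | h
  · have hs : Real.sqrt (1 - μ ^ 2) = 0 := by
      rw [Real.sqrt_eq_zero']
      linarith [h]
    rw [hs]
    simp
  · have hs : Real.sqrt (1 - μ ^ 2) ≠ 0 := ne_of_gt (Real.sqrt_pos.2 h)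
    have hsq : Real.sqrt (1 - μ ^ 2) * Real.sqrt (1 - μ ^ 2) = 1 - μ ^ 2 :=
      Real.mul_self_sqrt h.le
    field_simp
    linear_combination key - t * hsq

lemma hmerge (o : Option Bool) (t : Bool) :
    ((o.map fun _ => t).getD (o.getD t)) = t := by cases o <;> rfl

lemma happ {m : ℕ} (f : (Fin m → ℝ) → ℝ) (r : Fin m → Option Bool) (y : Fin m → Bool) :
    f (applyR r fun i => toPM (y i)) = f (fun i => toPM ((r i).getD (y i))) := by
  congr 1
  funext i
  cases h : r i <;> simp [applyR, h]

lemma prod_if_mem {α M : Type*} [Fintype α] [DecidableEq α] [CommMonoid M]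
    (S : Finset α) (a : α → M) : ∏ i ∈ S, a i = ∏ i, (if i ∈ S then a i else 1) := by
  rw [← Finset.prod_filter]
  congr 1
  ext i
  simp

lemma hsum_mem (ν : ℝ) (t : Bool) :
    ∑ o : Option Bool, wgt ν (o.map fun _ => t) * toPM (o.getD t) = toPM t * (1/2) := by
  rw [Fintype.sum_option, Fintype.sum_bool]
  cases t <;> simp [wgt, toPM] <;> ring

lemma hsum_not (ν : ℝ) (t : Bool) :
    ∑ o : Option Bool, wgt ν (o.map fun _ => t) = 1 + toPM t * ν := by
  rw [Fintype.sum_option, Fintype.sum_bool]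
  cases t <;> simp [wgt, toPM] <;> ring

/-- Main identity: the biased Fourier coefficient as an average over restrictions. -/
lemma hatMu_eq {m : ℕ} (μ : Fin m → ℝ) (f : (Fin m → ℝ) → ℝ) (S : Finset (Fin m)) :
    hatMu μ f S =
      (∏ i ∈ S, Real.sqrt (1 - μ i ^ 2)) * 2 ^ S.card *
        ∑ r : Fin m → Option Bool,
          (∏ i, wgt (μ i) (r i)) * hatU (fun x => f (applyR r x)) S := by
  have key : ∑ r : Fin m → Option Bool,
        (∏ i, wgt (μ i) (r i)) * hatU (fun x => f (applyR r x)) S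
      = ∑ z : Fin m → Bool, ((2:ℝ)^m)⁻¹ * (f (fun i => toPM (z i)) *
          ∏ i, (if i ∈ S then toPM (z i) * (1/2) else 1 + toPM (z i) * μ i)) := by
    have step1 : ∑ r : Fin m → Option Bool,
          (∏ i, wgt (μ i) (r i)) * hatU (fun x => f (applyR r x)) S
        = ∑ q : (Fin m → Option Bool) × (Fin m → Bool),
            ((2:ℝ)^m)⁻¹ * ((∏ i, wgt (μ i) (q.1 i)) *
              (f (fun i => toPM ((q.1 i).getD (q.2 i))) * ∏ i ∈ S, toPM (q.2 i))) := by
      rw [Fintype.sum_prod_type]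
      refine Finset.sum_congr rfl fun r _ => ?_
      simp only [hatU, Finset.mul_sum]
      refine Finset.sum_congr rfl fun y _ => ?_
      simp only [happ]
      ring
    have step2 : ∑ q : (Fin m → Option Bool) × (Fin m → Bool),
            ((2:ℝ)^m)⁻¹ * ((∏ i, wgt (μ i) (q.1 i)) *
              (f (fun i => toPM ((q.1 i).getD (q.2 i))) * ∏ i ∈ S, toPM (q.2 i)))
        = ∑ p : (Fin m → Bool) × (Fin m → Option Bool),
            ((2:ℝ)^m)⁻¹ * ((∏ i, wgt (μ i) ((Phi m p).1 i)) *
              (f (fun i => toPM (((Phi m p).1 i).getD ((Phi m p).2 i))) *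
                ∏ i ∈ S, toPM ((Phi m p).2 i))) :=
      (Equiv.sum_comp (Phi m) _).symm
    rw [step1, step2, Fintype.sum_prod_type]
    refine Finset.sum_congr rfl fun z _ => ?_
    have hPhi1 : ∀ (c : Fin m → Option Bool) (i : Fin m),
        (Phi m (z, c)).1 i = (c i).map (fun _ => z i) := fun _ _ => rfl
    have hPhi2 : ∀ (c : Fin m → Option Bool) (i : Fin m),
        (Phi m (z, c)).2 i = (c i).getD (z i) := fun _ _ => rfl
    calc ∑ c : Fin m → Option Bool,
          ((2:ℝ)^m)⁻¹ * ((∏ i, wgt (μ i) ((Phi m (z, c)).1 i)) *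
            (f (fun i => toPM (((Phi m (z, c)).1 i).getD ((Phi m (z, c)).2 i))) *
              ∏ i ∈ S, toPM ((Phi m (z, c)).2 i)))
        = ∑ c : Fin m → Option Bool,
            ((2:ℝ)^m)⁻¹ * (f (fun i => toPM (z i)) *
              ∏ i, (wgt (μ i) ((c i).map fun _ => z i) *
                (if i ∈ S then toPM ((c i).getD (z i)) else 1))) := by
          refine Finset.sum_congr rfl fun c _ => ?_
          simp only [hPhi1, hPhi2, hmerge]
          rw [prod_if_mem S (fun i => toPM ((c i).getD (z i))), Finset.prod_mul_distrib]
          ring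
      _ = ((2:ℝ)^m)⁻¹ * (f (fun i => toPM (z i)) *
            ∑ c : Fin m → Option Bool,
              ∏ i, (wgt (μ i) ((c i).map fun _ => z i) *
                (if i ∈ S then toPM ((c i).getD (z i)) else 1))) := by
          simp only [Finset.mul_sum]
      _ = ((2:ℝ)^m)⁻¹ * (f (fun i => toPM (z i)) *
            ∏ i, ∑ o : Option Bool, (wgt (μ i) (o.map fun _ => z i) *
              (if i ∈ S then toPM (o.getD (z i)) else 1))) := by
          rw [Fintype.prod_sum]
      _ = ((2:ℝ)^m)⁻¹ * (f (fun i => toPM (z i)) *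
            ∏ i, (if i ∈ S then toPM (z i) * (1/2) else 1 + toPM (z i) * μ i)) := by
          congr 2
          refine Finset.prod_congr rfl fun i _ => ?_
          by_cases hi : i ∈ S
          · simp only [hi, if_true]
            exact hsum_mem (μ i) (z i)
          · simp only [hi, if_false, mul_one]
            exact hsum_not (μ i) (z i)
  rw [key]
  unfold hatMu
  rw [Finset.mul_sum]
  refine Finset.sum_congr rfl fun z _ => ?_
  have hsplit2 : (∏ i, (if i ∈ S then toPM (z i) * (1/2) else 1 + toPM (z i) * μ i))
      = (∏ i ∈ S, toPM (z i) * (1/2)) * ∏ i ∈ Sᶜ, (1 + toPM (z i) * μ i) := by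
    rw [← Finset.prod_mul_prod_compl S]
    congr 1
    · exact Finset.prod_congr rfl fun i hi => if_pos hi
    · exact Finset.prod_congr rfl fun i hi => if_neg (Finset.mem_compl.1 hi)
  have hsplit1 : (∏ i, (1 + toPM (z i) * μ i) / 2)
      = (∏ i ∈ S, (1 + toPM (z i) * μ i) / 2) * ∏ i ∈ Sᶜ, (1 + toPM (z i) * μ i) / 2 :=
    (Finset.prod_mul_prod_compl S _).symm
  have hS : (∏ i ∈ S, (1 + toPM (z i) * μ i) / 2) *
        (∏ i ∈ S, (toPM (z i) - μ i) / Real.sqrt (1 - μ i ^ 2))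
      = (∏ i ∈ S, Real.sqrt (1 - μ i ^ 2)) * ∏ i ∈ S, toPM (z i) * (1/2) := by
    rw [← Finset.prod_mul_distrib, ← Finset.prod_mul_distrib]
    exact Finset.prod_congr rfl fun i _ => coord_S (toPM (z i)) (μ i) (toPM_sq (z i))
  have hAC : (∏ i ∈ Sᶜ, (1 + toPM (z i) * μ i) / 2)
      = (∏ i ∈ Sᶜ, (1 + toPM (z i) * μ i)) * ((2:ℝ)⁻¹) ^ (m - S.card) := by
    have hconst : ((2:ℝ)⁻¹) ^ (m - S.card) = ∏ _i ∈ Sᶜ, (2:ℝ)⁻¹ := by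
      rw [Finset.prod_const, Finset.card_compl, Fintype.card_fin]
    rw [hconst, ← Finset.prod_mul_distrib]
    exact Finset.prod_congr rfl fun i _ => by ring
  have hcard : S.card ≤ m := by
    simpa using Finset.card_le_univ S
  have hnum : ((2:ℝ)⁻¹) ^ (m - S.card) = 2 ^ S.card * ((2:ℝ)^m)⁻¹ := by
    have h2m : (2:ℝ)^m = 2 ^ (m - S.card) * 2 ^ S.card := by
      rw [← pow_add, Nat.sub_add_cancel hcard]
    have h2 : ((2:ℝ))^(S.card) ≠ 0 := by positivity
    have h3 : ((2:ℝ))^(m - S.card) ≠ 0 := by positivity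
    rw [h2m, inv_pow]
    field_simp
  rw [hsplit1, hsplit2, hAC, hnum]
  linear_combination (f (fun i => toPM (z i)) * (∏ i ∈ Sᶜ, (1 + toPM (z i) * μ i)) *
    (2:ℝ) ^ S.card * ((2:ℝ)^m)⁻¹) * hS

theorem stmt19 {m : ℕ} (ℓ : ℕ) (hℓ : 1 ≤ ℓ ∧ ℓ ≤ m) (f : (Fin m → ℝ) → ℝ)
    (μ : Fin m → ℝ) (hμ : ∀ i, μ i ∈ Set.Icc (-(1:ℝ)/2) (1/2)) (w : ℝ)
    (hw : ∀ r : Fin m → Option Bool,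
      ∑ S ∈ Finset.univ.filter (fun S : Finset (Fin m) => S.card = ℓ),
        |hatU (fun x => f (applyR r x)) S| ≤ w) :
    ∑ S ∈ Finset.univ.filter (fun S : Finset (Fin m) => S.card = ℓ),
      |hatMu μ f S| ≤ 4 ^ ℓ * w := by
  have hw0 : 0 ≤ w := le_trans (Finset.sum_nonneg fun S _ => abs_nonneg _) (hw fun _ => none)
  have hW : ∀ r : Fin m → Option Bool, 0 ≤ ∏ i, wgt (μ i) (r i) :=
    fun r => Finset.prod_nonneg fun i _ => wgt_nonneg (hμ i) _
  have hWsum : ∑ r : Fin m → Option Bool, ∏ i, wgt (μ i) (r i) = 1 := by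
    rw [← Fintype.prod_sum]
    exact Finset.prod_eq_one fun i _ => wgt_sum (μ i)
  have hσ : ∀ S : Finset (Fin m), |∏ i ∈ S, Real.sqrt (1 - μ i ^ 2)| ≤ 1 := by
    intro S
    rw [abs_of_nonneg (Finset.prod_nonneg fun i _ => Real.sqrt_nonneg _)]
    apply Finset.prod_le_one (fun i _ => Real.sqrt_nonneg _)
    intro i _
    exact Real.sqrt_le_one.mpr (by nlinarith [sq_nonneg (μ i)])
  calc ∑ S ∈ Finset.univ.filter (fun S : Finset (Fin m) => S.card = ℓ), |hatMu μ f S|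
      ≤ ∑ S ∈ Finset.univ.filter (fun S : Finset (Fin m) => S.card = ℓ),
          (2:ℝ) ^ ℓ * ∑ r : Fin m → Option Bool,
            (∏ i, wgt (μ i) (r i)) * |hatU (fun x => f (applyR r x)) S| := by
        apply Finset.sum_le_sum
        intro S hS
        rw [Finset.mem_filter] at hS
        rw [hatMu_eq, abs_mul, abs_mul, hS.2]
        have h2 : |(2:ℝ) ^ ℓ| = 2 ^ ℓ := abs_of_nonneg (by positivity)
        calc |∏ i ∈ S, Real.sqrt (1 - μ i ^ 2)| * |(2:ℝ) ^ ℓ| *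
              |∑ r : Fin m → Option Bool, (∏ i, wgt (μ i) (r i)) * hatU (fun x => f (applyR r x)) S|
            ≤ 1 * (2 ^ ℓ) * ∑ r : Fin m → Option Bool,
                (∏ i, wgt (μ i) (r i)) * |hatU (fun x => f (applyR r x)) S| := by
              apply mul_le_mul
              · rw [h2]; exact mul_le_mul_of_nonneg_right (hσ S) (by positivity)
              · refine le_trans (Finset.abs_sum_le_sum_abs _ _) ?_
                apply Finset.sum_le_sum
                intro r _
                rw [abs_mul, abs_of_nonneg (hW r)]
              · exact abs_nonneg _
              · positivity
          _ = 2 ^ ℓ * ∑ r : Fin m → Option Bool,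
                (∏ i, wgt (μ i) (r i)) * |hatU (fun x => f (applyR r x)) S| := by ring
    _ = (2:ℝ) ^ ℓ * ∑ r : Fin m → Option Bool, (∏ i, wgt (μ i) (r i)) *
          ∑ S ∈ Finset.univ.filter (fun S : Finset (Fin m) => S.card = ℓ),
            |hatU (fun x => f (applyR r x)) S| := by
        rw [← Finset.mul_sum, Finset.sum_comm]
        congr 1
        apply Finset.sum_congr rfl
        intro r _
        rw [Finset.mul_sum]
    _ ≤ (2:ℝ) ^ ℓ * ∑ r : Fin m → Option Bool, (∏ i, wgt (μ i) (r i)) * w := by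
        apply mul_le_mul_of_nonneg_left _ (by positivity)
        apply Finset.sum_le_sum
        intro r _
        exact mul_le_mul_of_nonneg_left (hw r) (hW r)
    _ = (2:ℝ) ^ ℓ * w := by rw [← Finset.sum_mul, hWsum, one_mul]
    _ ≤ 4 ^ ℓ * w := by
        apply mul_le_mul_of_nonneg_right _ hw0
        exact pow_le_pow_left₀ (by norm_num) (by norm_num) ℓ
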